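/- Let μ be a nonzero finite Borel measure on ℝ^D with finite second moment (∫ ‖y‖² dμ(y) < ∞), and let b = (1/μ(ℝ^D)) ∫ y dμ(y) be its barycenter. Let L be an affine subspace of ℝ^D with direction (underlying linear subspace) V. Then ∫ dist(y, b + V)² dμ(y) ≤ ∫ dist(y, L)² dμ(y); that is, translating a flat so that it passes through the barycenter does not increase the mean squared distance. -/

import Mathlib

set_option maxRecDepth 8000
open MeasureTheory Metric

lemma infDist_mk'_eq {E : Type*} [NormedAddCommGroup E] [InnerProductSpace ℝ E]
    (V : Submodule ℝ E) [V.HasOrthogonalProjection] (a y : E) :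
    infDist y ((AffineSubspace.mk' a V : AffineSubspace ℝ E) : Set E)
      = ‖(y - a) - V.orthogonalProjectionOnto (y - a)‖ := by
  have hset : ((AffineSubspace.mk' a V : AffineSubspace ℝ E) : Set E)
      = (fun v => a + v) '' (V : Set E) := by
    ext p
    simp only [SetLike.mem_coe, AffineSubspace.mem_mk', Set.mem_image]
    constructor
    · intro h; exact ⟨p - a, h, by abel⟩
    · rintro ⟨v, hv, rfl⟩; simpa using hv
  have hiso : Isometry (fun v : E => a + v) := Isometry.of_dist_eq (by intro x y; simp [dist_eq_norm])
  have h1 : infDist y ((fun v => a + v) '' (V : Set E)) = infDist (y - a) (V : Set E) := by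
    have := infDist_image (x := y - a) (t := (V : Set E)) hiso
    simpa using this
  rw [hset, h1, infDist_eq_iInf, ← Submodule.starProjection_apply, Submodule.starProjection_minimal]
  congr 1
  ext v
  exact dist_eq_norm _ _

theorem distSq_barycenter_flat_le (D : ℕ) (μ : Measure (EuclideanSpace ℝ (Fin D)))
    [IsFiniteMeasure μ] (hμ : μ ≠ 0)
    (hmom : Integrable (fun y => ‖y‖ ^ 2) μ)
    (L : AffineSubspace ℝ (EuclideanSpace ℝ (Fin D)))
    (hLne : (L : Set (EuclideanSpace ℝ (Fin D))).Nonempty) :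
    ∫ y, infDist y ((AffineSubspace.mk' ((μ Set.univ).toReal⁻¹ • ∫ z, z ∂μ) L.direction :
        AffineSubspace ℝ (EuclideanSpace ℝ (Fin D))) :
        Set (EuclideanSpace ℝ (Fin D))) ^ 2 ∂μ ≤
      ∫ y, infDist y (L : Set (EuclideanSpace ℝ (Fin D))) ^ 2 ∂μ := by
  set E := EuclideanSpace ℝ (Fin D)
  set V := L.direction with hV
  obtain ⟨a, ha⟩ := hLne
  set b : E := (μ Set.univ).toReal⁻¹ • ∫ z, z ∂μ with hb
  have hL : L = AffineSubspace.mk' a V := (AffineSubspace.mk'_eq ha).symm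
  set Q : E →L[ℝ] E := ContinuousLinearMap.id ℝ E - V.subtypeL.comp (V.orthogonalProjectionOnto)
    with hQdef
  have hQ : ∀ (c y : E),
      infDist y ((AffineSubspace.mk' c V : AffineSubspace ℝ E) : Set E) = ‖Q y - Q c‖ := by
    intro c y
    rw [infDist_mk'_eq, ← map_sub Q y c]
    simp [hQdef]
  -- basic measure facts
  have hμt : (0:ℝ) < (μ Set.univ).toReal := by
    simp only [ENNReal.toReal_pos_iff]
    exact ⟨Measure.measure_univ_pos.mpr hμ, measure_lt_top μ _⟩
  -- integrability
  have hy_int : Integrable (fun y : E => y) μ := by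
    refine Integrable.mono' ((integrable_const (1:ℝ)).add hmom)
      aestronglyMeasurable_id ?_
    filter_upwards with y
    have h1 : ‖y‖ ≤ 1 + ‖y‖ ^ 2 := by nlinarith [norm_nonneg y, sq_nonneg (‖y‖ - 1)]
    simpa using h1
  have hQy_int : Integrable (fun y : E => Q y) μ := Q.integrable_comp hy_int
  have hsq : ∀ c : E, Integrable (fun y : E => ‖Q y - c‖ ^ 2) μ := by
    intro c
    refine Integrable.mono' ((hmom.const_mul (2 * ‖Q‖ ^ 2)).add (integrable_const (2 * ‖c‖ ^ 2)))
      (Continuous.aestronglyMeasurable (by fun_prop)) ?_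
    filter_upwards with y
    have h1 : ‖Q y‖ ≤ ‖Q‖ * ‖y‖ := Q.le_opNorm y
    have h2 : ‖Q y - c‖ ≤ ‖Q y‖ + ‖c‖ := norm_sub_le _ _
    have h3 : (0:ℝ) ≤ ‖Q y - c‖ := norm_nonneg _
    simp only [Pi.add_apply]
    rw [Real.norm_eq_abs, abs_of_nonneg (by positivity)]
    nlinarith [norm_nonneg (Q y), norm_nonneg c, norm_nonneg y,
      norm_nonneg (Q : E →L[ℝ] E), sq_nonneg (‖Q‖ * ‖y‖ - ‖c‖),
      mul_nonneg (norm_nonneg (Q : E →L[ℝ] E)) (norm_nonneg y)]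
  -- the centered integral vanishes
  have hcenter : ∫ y, (Q y - Q b) ∂μ = 0 := by
    rw [integral_sub hQy_int (integrable_const _), integral_const,
      ContinuousLinearMap.integral_comp_comm Q hy_int]
    have : Q (∫ y, y ∂μ) = (μ Set.univ).toReal • Q b := by
      rw [hb, Q.map_smul, smul_inv_smul₀ (ne_of_gt hμt)]
    rw [this, measureReal_def, sub_self]
  have hcross : ∫ y, (inner ℝ (Q y - Q b) (Q b - Q a) : ℝ) ∂μ = 0 := by
    have : ∀ y : E, (inner ℝ (Q y - Q b) (Q b - Q a) : ℝ) = inner ℝ (Q b - Q a) (Q y - Q b) := by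
      intro y; exact real_inner_comm _ _
    simp only [this]
    have hsub : Integrable (fun y : E => Q y - Q b) μ := hQy_int.sub (integrable_const _)
    rw [integral_inner hsub (Q b - Q a), hcenter, inner_zero_right]
  -- pointwise expansion
  have hpt : ∀ y : E, ‖Q y - Q a‖ ^ 2
      = ‖Q y - Q b‖ ^ 2 + (2 * (inner ℝ (Q y - Q b) (Q b - Q a) : ℝ) + ‖Q b - Q a‖ ^ 2) := by
    intro y
    have : Q y - Q a = (Q y - Q b) + (Q b - Q a) := by abel
    rw [this, norm_add_sq_real]
    ring
  have hcross_int : Integrable (fun y : E => (inner ℝ (Q y - Q b) (Q b - Q a) : ℝ)) μ :=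
    (hQy_int.sub (integrable_const _)).inner_const _
  calc ∫ y, infDist y ((AffineSubspace.mk' b V : AffineSubspace ℝ E) : Set E) ^ 2 ∂μ
      = ∫ y, ‖Q y - Q b‖ ^ 2 ∂μ := by simp only [hQ b]
    _ ≤ ∫ y, ‖Q y - Q a‖ ^ 2 ∂μ := by
        have : ∫ y, ‖Q y - Q a‖ ^ 2 ∂μ
            = ∫ y, ‖Q y - Q b‖ ^ 2 ∂μ
              + (2 * ∫ y, (inner ℝ (Q y - Q b) (Q b - Q a) : ℝ) ∂μ
              + (μ Set.univ).toReal * ‖Q b - Q a‖ ^ 2) := by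
          rw [integral_congr_ae (Filter.Eventually.of_forall fun y => hpt y)]
          have I1 : ∫ y, (‖Q y - Q b‖ ^ 2
                + (2 * (inner ℝ (Q y - Q b) (Q b - Q a) : ℝ) + ‖Q b - Q a‖ ^ 2)) ∂μ
              = (∫ y, ‖Q y - Q b‖ ^ 2 ∂μ)
                + ∫ y, (2 * (inner ℝ (Q y - Q b) (Q b - Q a) : ℝ) + ‖Q b - Q a‖ ^ 2) ∂μ :=
            integral_add (hsq (Q b)) ((hcross_int.const_mul 2).add (integrable_const _))
          have I2 : ∫ y, (2 * (inner ℝ (Q y - Q b) (Q b - Q a) : ℝ) + ‖Q b - Q a‖ ^ 2) ∂μ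
              = (∫ y, 2 * (inner ℝ (Q y - Q b) (Q b - Q a) : ℝ) ∂μ)
                + ∫ _y, ‖Q b - Q a‖ ^ 2 ∂μ :=
            integral_add (hcross_int.const_mul 2) (integrable_const _)
          have I3 : ∫ y, 2 * (inner ℝ (Q y - Q b) (Q b - Q a) : ℝ) ∂μ
              = 2 * ∫ y, (inner ℝ (Q y - Q b) (Q b - Q a) : ℝ) ∂μ := integral_const_mul 2 _
          rw [I1, I2, I3, integral_const]
          simp [smul_eq_mul, measureReal_def]
        rw [this, hcross]
        have : (0:ℝ) ≤ (μ Set.univ).toReal * ‖Q b - Q a‖ ^ 2 := by positivity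
        linarith
    _ = ∫ y, infDist y (L : Set E) ^ 2 ∂μ := by
        conv_rhs => rw [hL]
        refine integral_congr_ae (Filter.Eventually.of_forall fun y => ?_)
        show ‖Q y - Q a‖ ^ 2
            = infDist y ((AffineSubspace.mk' a V : AffineSubspace ℝ E) : Set E) ^ 2
        rw [hQ a]
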